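/- For every λ > 0 and every irrational α, both λ and −λ belong to σ^H(c,v); moreover, the set σ^H(c,v) ∩ (−λ, λ) is nonempty. -/

import Mathlib

open MeasureTheory Filter Real

noncomputable section

/-- Distance from a real number to the nearest integer, `‖x‖_𝕋`. -/
def distT (x : ℝ) : ℝ := |x - round x|

/-- `α ∈ DC(γ,σ)`. -/
def DiophantineCond (γ σ α : ℝ) : Prop :=
  ∀ k : ℤ, k ≠ 0 → γ / |(k : ℝ)| ^ σ ≤ distT (k * α)

/-- `α ∈ DC = ⋃_{γ,σ>0} DC(γ,σ)`. -/
def Diophantine (α : ℝ) : Prop :=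
  ∃ γ σ : ℝ, 0 < γ ∧ 0 < σ ∧ DiophantineCond γ σ α

/-- The mosaic-type potential `v(θ,n)`. -/
def mosV (α lam θ : ℝ) (n : ℤ) : ℝ :=
  if Odd n then Real.cos (2 * π * (((n : ℝ) - 1) * α + θ))
  else Real.cos (2 * π * ((n : ℝ) * α + θ))

/-- The mosaic-type hopping `c(θ,n)`. -/
def mosC (α lam θ : ℝ) (n : ℤ) : ℝ :=
  if Odd n then lam else Real.cos (2 * π * ((n : ℝ) * α + θ))

/-- `θ ∈ 𝕋₀`. -/
def memT0 (α θ : ℝ) : Prop := ∀ n : ℤ, Real.cos (2 * π * ((n : ℝ) * α + θ)) ≠ 0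

/-- The Hilbert space `ℓ²(ℤ,ℂ)`. -/
abbrev ZSeq := lp (fun _ : ℤ => ℂ) 2

/-- `H` acts as the mosaic-type Jacobi operator `H_{c,v,θ}` on `ℓ²(ℤ)`. -/
def IsMosaicOp (α lam θ : ℝ) (H : ZSeq →L[ℂ] ZSeq) : Prop :=
  ∀ u : ZSeq, ∀ n : ℤ,
    (H u : ∀ _ : ℤ, ℂ) n =
      (mosC α lam θ n : ℂ) * (u : ∀ _ : ℤ, ℂ) (n + 1)
      + (mosC α lam θ (n - 1) : ℂ) * (u : ∀ _ : ℤ, ℂ) (n - 1)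
      + (mosV α lam θ n : ℂ) * (u : ∀ _ : ℤ, ℂ) n

/-- The spectrum of `H`, viewed as a subset of `ℝ`. -/
def realSpectrum (H : ZSeq →L[ℂ] ZSeq) : Set ℝ := {E : ℝ | (E : ℂ) ∈ spectrum ℂ H}

/-- `μ` is the spectral measure of the bounded self-adjoint operator `H` at the vector `φ`:
it is compactly supported and has the correct moments. -/
def IsSpectralMeasure (H : ZSeq →L[ℂ] ZSeq) (φ : ZSeq) (μ : Measure ℝ) : Prop :=
  (∃ R : ℝ, μ {x : ℝ | R < |x|} = 0) ∧
  ∀ k : ℕ, (∫ x : ℝ, (x : ℂ) ^ k ∂μ) = @inner ℂ _ _ φ ((H ^ k) φ)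

/-- The restriction of `μ` to `B` is singular continuous: it is mutually singular with
Lebesgue measure and has no atoms. -/
def SingContOn (μ : Measure ℝ) (B : Set ℝ) : Prop :=
  (μ.restrict B).MutuallySingular volume ∧ ∀ x : ℝ, μ.restrict B {x} = 0

/-- The restriction of `μ` to `B` is absolutely continuous w.r.t. Lebesgue measure. -/
def AbsContOn (μ : Measure ℝ) (B : Set ℝ) : Prop := μ.restrict B ≪ volume

/-- The restriction of `μ` to `B` is pure point (supported on a countable set). -/
def PurePointOn (μ : Measure ℝ) (B : Set ℝ) : Prop :=
  ∃ D : Set ℝ, D.Countable ∧ μ.restrict B Dᶜ = 0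

/-- `u : ℤ → ℂ` is a formal solution of `H_{c,v,θ} u = E u`. -/
def MosaicEigenEq (α lam θ E : ℝ) (u : ℤ → ℂ) : Prop :=
  ∀ n : ℤ,
    (mosC α lam θ n : ℂ) * u (n + 1) + (mosC α lam θ (n - 1) : ℂ) * u (n - 1)
      + (mosV α lam θ n : ℂ) * u n = (E : ℂ) * u n

/-- Anderson localization of the mosaic operator in the set `S`: pure point spectrum in `S`
together with exponential decay of the eigenfunctions with eigenvalue in `S`. -/
def AndersonLocalizationIn (α lam θ : ℝ) (H : ZSeq →L[ℂ] ZSeq) (S : Set ℝ) : Prop :=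
  (∀ φ : ZSeq, ∀ μ : Measure ℝ, IsSpectralMeasure H φ μ → PurePointOn μ S) ∧
  (∀ E ∈ S, ∀ u : ℤ → ℂ, Memℓp u 2 → u ≠ 0 → MosaicEigenEq α lam θ E u →
    ∃ C γ : ℝ, 0 < γ ∧ ∀ n : ℤ, ‖u n‖ ≤ C * Real.exp (-γ * |(n : ℝ)|))


lemma summable_norm_sq (x : ZSeq) : Summable (fun n : ℤ => ‖(x : ∀ _ : ℤ, ℂ) n‖ ^ 2) := by
  have hp : (0:ℝ) < (2 : ENNReal).toReal := by norm_num
  have h0 := (memℓp_gen_iff hp).1 (lp.memℓp x)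
  have h2 : ∀ r : ℝ, r ^ (2 : ENNReal).toReal = r ^ (2:ℕ) := fun r => by
    rw [show ((2:ENNReal)).toReal = ((2:ℕ):ℝ) by norm_num, Real.rpow_natCast]
  simpa [h2] using h0

lemma summable_shift_mul (x y : ZSeq) (k : ℤ) :
    Summable (fun n : ℤ => ‖(x : ∀ _ : ℤ, ℂ) (n + k)‖ * ‖(y : ∀ _ : ℤ, ℂ) n‖) := by
  have hx : Summable (fun n : ℤ => ‖(x : ∀ _ : ℤ, ℂ) (n + k)‖ ^ 2) := by
    have := (Equiv.addRight k).summable_iff.mpr (summable_norm_sq x)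
    exact this
  have hy := summable_norm_sq y
  refine Summable.of_nonneg_of_le (fun n => by positivity) (fun n => ?_)
    ((hx.add hy).div_const 2)
  nlinarith [sq_nonneg (‖(x : ∀ _ : ℤ, ℂ) (n + k)‖ - ‖(y : ∀ _ : ℤ, ℂ) n‖),
    norm_nonneg ((x : ∀ _ : ℤ, ℂ) (n + k)), norm_nonneg ((y : ∀ _ : ℤ, ℂ) n)]

lemma mosaic_selfAdjoint (α lam θ : ℝ) (H : ZSeq →L[ℂ] ZSeq) (hH : IsMosaicOp α lam θ H) :
    IsSelfAdjoint H := by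
  rw [ContinuousLinearMap.isSelfAdjoint_iff']
  symm
  rw [ContinuousLinearMap.eq_adjoint_iff]
  intro x y
  set M : ℝ := max |lam| 1 with hM
  have hMc : ∀ n : ℤ, |mosC α lam θ n| ≤ M := by
    intro n
    rw [mosC]
    split
    · calc |lam| ≤ max |lam| 1 := le_max_left _ _
      _ = M := rfl
    · exact (Real.abs_cos_le_one _).trans (le_max_right _ _)
  have hMv : ∀ n : ℤ, |mosV α lam θ n| ≤ M := by
    intro n
    rw [mosV]
    split <;> exact (Real.abs_cos_le_one _).trans (le_max_right _ _)
  set xf : ℤ → ℂ := fun n => (x : ∀ _ : ℤ, ℂ) n with hxf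
  set yf : ℤ → ℂ := fun n => (y : ∀ _ : ℤ, ℂ) n with hyf
  set cc : ℤ → ℝ := mosC α lam θ with hcc
  set vv : ℤ → ℝ := mosV α lam θ with hvv
  set a : ℤ → ℂ := fun n => (cc n : ℂ) * (starRingEnd ℂ) (xf (n+1)) * yf n with ha
  set b : ℤ → ℂ := fun n => (cc (n-1) : ℂ) * (starRingEnd ℂ) (xf (n-1)) * yf n with hb
  set d : ℤ → ℂ := fun n => (vv n : ℂ) * (starRingEnd ℂ) (xf n) * yf n with hd
  set a' : ℤ → ℂ := fun n => (cc n : ℂ) * (starRingEnd ℂ) (xf n) * yf (n+1) with ha'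
  set b' : ℤ → ℂ := fun n => (cc (n-1) : ℂ) * (starRingEnd ℂ) (xf n) * yf (n-1) with hb'
  have key : ∀ (w : ℤ → ℝ), (∀ n, |w n| ≤ M) → ∀ (f g : ℤ → ℂ),
      (Summable fun n => ‖f n‖ * ‖g n‖) → Summable (fun n => (w n : ℂ) * f n * g n) := by
    intro w hw f g hfg
    refine Summable.of_norm_bounded (hfg.mul_left M) (fun n => ?_)
    rw [norm_mul, norm_mul, Complex.norm_real, Real.norm_eq_abs, mul_assoc]
    exact mul_le_mul_of_nonneg_right (hw n) (by positivity)
  have Sa : Summable a := by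
    refine key _ (fun n => hMc n) _ _ ?_
    simpa using summable_shift_mul x y 1
  have Sb : Summable b := by
    refine key (fun n => cc (n-1)) (fun n => hMc (n-1)) _ _ ?_
    have := summable_shift_mul x y (-1)
    simpa [sub_eq_add_neg] using this
  have Sd : Summable d := by
    refine key _ (fun n => hMv n) _ _ ?_
    simpa using summable_shift_mul x y 0
  have Sa' : Summable a' := by
    refine key _ (fun n => hMc n) _ _ ?_
    have := summable_shift_mul y x 1
    simpa [mul_comm] using this
  have Sb' : Summable b' := by
    refine key (fun n => cc (n-1)) (fun n => hMc (n-1)) _ _ ?_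
    have := summable_shift_mul y x (-1)
    simpa [mul_comm, sub_eq_add_neg] using this
  have hL : (inner ℂ (H x) y : ℂ) = ∑' n, (a n + b n + d n) := by
    rw [lp.inner_eq_tsum]
    refine tsum_congr (fun n => ?_)
    rw [RCLike.inner_apply, hH x n]
    simp only [map_add, map_mul, Complex.conj_ofReal, ha, hb, hd, hxf, hyf, hcc, hvv]
    ring
  have hR : (inner ℂ x (H y) : ℂ) = ∑' n, (a' n + b' n + d n) := by
    rw [lp.inner_eq_tsum]
    refine tsum_congr (fun n => ?_)
    rw [RCLike.inner_apply, hH y n]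
    simp only [ha', hb', hd, hxf, hyf, hcc, hvv]
    ring
  rw [hL, hR, Summable.tsum_add (Sa.add Sb) Sd, Summable.tsum_add Sa Sb, Summable.tsum_add (Sa'.add Sb') Sd,
    Summable.tsum_add Sa' Sb']
  have hab' : ∑' n, a n = ∑' n, b' n := by
    calc ∑' n, a n = ∑' n, b' (n + 1) := by
          refine tsum_congr (fun n => ?_)
          have e1 : n + 1 - 1 = n := by ring
          simp only [ha, hb']
          rw [e1]
    _ = ∑' n, b' n := (Equiv.addRight (1:ℤ)).tsum_eq b'
  have hba' : ∑' n, b n = ∑' n, a' n := by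
    calc ∑' n, b n = ∑' n, a' (n + (-1)) := by
          refine tsum_congr (fun n => ?_)
          have e1 : n + (-1) = n - 1 := by ring
          have e2 : n + (-1) + 1 = n := by ring
          simp only [ha', hb]
          rw [e2, e1]
    _ = ∑' n, a' n := (Equiv.addRight (-1:ℤ)).tsum_eq a'
  rw [hab', hba']
  ring

def Wc (α θ : ℝ) (m : ℤ) : ℝ := Real.cos (2 * π * ((m : ℝ) * α + θ))

variable {α lam θ : ℝ}

lemma mosC_odd {n : ℤ} (hn : Odd n) : mosC α lam θ n = lam := if_pos hn
lemma mosC_even {n : ℤ} (hn : ¬ Odd n) : mosC α lam θ n = Wc α θ n := if_neg hn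
lemma mosV_odd {n : ℤ} (hn : Odd n) : mosV α lam θ n = Wc α θ (n - 1) := by
  rw [mosV, if_pos hn, Wc]
  congr 2
  push_cast
  ring
lemma mosV_even {n : ℤ} (hn : ¬ Odd n) : mosV α lam θ n = Wc α θ n := if_neg hn

lemma memℓp_of_finite_support (u : ℤ → ℂ) (s : Finset ℤ) (h : ∀ n ∉ s, u n = 0) :
    Memℓp u 2 := by
  apply memℓp_gen
  apply summable_of_ne_finset_zero (s := s)
  intro n hn
  rw [h n hn]
  simp [Real.zero_rpow]

lemma norm_sq_eq_sum (x : ZSeq) (s : Finset ℤ) (h : ∀ n ∉ s, (x : ∀ _ : ℤ, ℂ) n = 0) :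
    ‖x‖ ^ 2 = ∑ n ∈ s, ‖(x : ∀ _ : ℤ, ℂ) n‖ ^ 2 := by
  have hp : (0:ℝ) < (2 : ENNReal).toReal := by norm_num
  have h1 := lp.norm_rpow_eq_tsum hp x
  rw [tsum_eq_sum (s := s) (fun n hn => by rw [h n hn]; simp [Real.zero_rpow])] at h1
  have h2 : ∀ r : ℝ, r ^ (2 : ENNReal).toReal = r ^ (2:ℕ) := fun r => by
    rw [show ((2:ENNReal)).toReal = ((2:ℕ):ℝ) by norm_num, Real.rpow_natCast]
  rw [h2] at h1
  simp only [h2] at h1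
  exact_mod_cast h1

lemma mem_spectrum_of_approx (T : ZSeq →L[ℂ] ZSeq) (E : ℂ)
    (h : ∀ C : ℝ, 0 < C → ∃ x : ZSeq, C * ‖E • x - T x‖ < ‖x‖) :
    E ∈ spectrum ℂ T := by
  by_contra hE
  rw [spectrum.notMem_iff] at hE
  obtain ⟨U, hU⟩ := hE
  set B : ZSeq →L[ℂ] ZSeq := (↑U⁻¹ : ZSeq →L[ℂ] ZSeq) with hB
  obtain ⟨x, hx⟩ := h (‖B‖ + 1) (by positivity)
  have hUx : (↑U : ZSeq →L[ℂ] ZSeq) x = E • x - T x := by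
    rw [hU]
    simp [Algebra.algebraMap_eq_smul_one, ContinuousLinearMap.sub_apply]
  have h1 : B ((↑U : ZSeq →L[ℂ] ZSeq) x) = x := by
    calc B ((↑U : ZSeq →L[ℂ] ZSeq) x) = ((↑U⁻¹ * ↑U : ZSeq →L[ℂ] ZSeq)) x := rfl
    _ = x := by rw [U.inv_mul]; rfl
  have h2 : ‖x‖ ≤ ‖B‖ * ‖E • x - T x‖ := by
    calc ‖x‖ = ‖B ((↑U : ZSeq →L[ℂ] ZSeq) x)‖ := by rw [h1]
    _ ≤ ‖B‖ * ‖(↑U : ZSeq →L[ℂ] ZSeq) x‖ := B.le_opNorm _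
    _ = ‖B‖ * ‖E • x - T x‖ := by rw [hUx]
  have h3 : ‖B‖ * ‖E • x - T x‖ ≤ (‖B‖ + 1) * ‖E • x - T x‖ := by
    have := norm_nonneg (E • x - T x)
    nlinarith
  linarith

lemma pm_lam_mem (α lam θ : ℝ) (H : ZSeq →L[ℂ] ZSeq)
    (hH : IsMosaicOp α lam θ H) (σ : ℝ) (hσ : σ = 1 ∨ σ = -1) :
    ((σ * lam : ℝ) : ℂ) ∈ spectrum ℂ H := by
  have hσ2 : (σ:ℂ) * (σ:ℂ) = 1 := by rcases hσ with h | h <;> rw [h] <;> norm_num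
  have hσn : ‖(σ:ℂ)‖ = 1 := by rcases hσ with h | h <;> rw [h] <;> norm_num
  apply mem_spectrum_of_approx
  intro C hC
  set K : ℕ := ⌈2 * C ^ 2⌉₊ + 1 with hK
  obtain ⟨N, hN⟩ : ∃ N : ℤ, N = 2 * (K : ℤ) := ⟨_, rfl⟩
  have hKpos : 1 ≤ K := Nat.le_add_left 1 _
  have hN2 : 2 ≤ N := by omega
  have hNeven : N % 2 = 0 := by omega
  set E : ℂ := ((σ * lam : ℝ) : ℂ) with hEdef
  have hE : E = (σ:ℂ) * (lam:ℂ) := by rw [hEdef]; push_cast; ring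
  -- the truncated exact generalized eigenfunction
  set uf : ℤ → ℂ := fun n =>
    if 1 ≤ n ∧ n ≤ N then
      (if n % 2 = 1 then (-(σ:ℂ)) ^ ((n - 1) / 2).toNat
       else (σ:ℂ) * (-(σ:ℂ)) ^ ((n - 2) / 2).toNat)
    else 0 with huf
  have huf0 : ∀ n : ℤ, ¬(1 ≤ n ∧ n ≤ N) → uf n = 0 := by
    intro n hn
    simp only [huf]
    rw [if_neg hn]
  have hufabs : ∀ n : ℤ, ‖uf n‖ ≤ 1 := by
    intro n
    simp only [huf]
    split
    · split
      · rw [norm_pow, norm_neg, hσn, one_pow]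
      · rw [norm_mul, norm_pow, norm_neg, hσn, one_pow, mul_one]
    · simp
  have hufabs1 : ∀ n : ℤ, 1 ≤ n → n ≤ N → ‖uf n‖ = 1 := by
    intro n h1 h2
    simp only [huf]
    rw [if_pos ⟨h1, h2⟩]
    split
    · rw [norm_pow, norm_neg, hσn, one_pow]
    · rw [norm_mul, norm_pow, norm_neg, hσn, one_pow, mul_one]
  have huf1 : uf 1 = 1 := by
    simp only [huf]
    rw [if_pos ⟨by norm_num, by omega⟩, if_pos (by norm_num)]
    norm_num
  have hstep1 : ∀ n : ℤ, n % 2 = 1 → 1 ≤ n → n + 1 ≤ N → uf (n + 1) = (σ:ℂ) * uf n := by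
    intro n hpar h1 h2
    have hA : uf (n + 1) = (σ:ℂ) * (-(σ:ℂ)) ^ (((n + 1) - 2) / 2).toNat := by
      simp only [huf]
      rw [if_pos ⟨by omega, h2⟩, if_neg (by omega)]
    have hB : uf n = (-(σ:ℂ)) ^ ((n - 1) / 2).toNat := by
      simp only [huf]
      rw [if_pos ⟨h1, by omega⟩, if_pos hpar]
    rw [hA, hB, show (n + 1) - 2 = n - 1 from by ring]
  have hstep2 : ∀ n : ℤ, n % 2 = 0 → 1 ≤ n → n + 1 ≤ N → uf (n + 1) = -uf n := by
    intro n hpar h1 h2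
    have hA : uf (n + 1) = (-(σ:ℂ)) ^ (((n + 1) - 1) / 2).toNat := by
      simp only [huf]
      rw [if_pos ⟨by omega, h2⟩, if_pos (by omega)]
    have hB : uf n = (σ:ℂ) * (-(σ:ℂ)) ^ ((n - 2) / 2).toNat := by
      simp only [huf]
      rw [if_pos ⟨h1, by omega⟩, if_neg (by omega)]
    have hexp : (((n + 1) - 1) / 2).toNat = ((n - 2) / 2).toNat + 1 := by omega
    rw [hA, hB, hexp, pow_succ]
    ring
  -- the lp element
  set x : ZSeq := ⟨uf, memℓp_of_finite_support uf (Finset.Icc 1 N)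
    (fun n hn => huf0 n (by simpa [Finset.mem_Icc] using hn))⟩ with hx
  have hxapp : ∀ m : ℤ, (x : ∀ _ : ℤ, ℂ) m = uf m := fun m => rfl
  -- norm of x
  have hxnorm : ‖x‖ ^ 2 = 2 * (K : ℝ) := by
    rw [norm_sq_eq_sum x (Finset.Icc 1 N)
      (fun n hn => huf0 n (by simpa [Finset.mem_Icc] using hn))]
    have hcon : ∀ n ∈ Finset.Icc (1:ℤ) N, ‖(x : ∀ _ : ℤ, ℂ) n‖ ^ 2 = 1 := by
      intro n hn
      rw [Finset.mem_Icc] at hn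
      rw [hxapp, hufabs1 n hn.1 hn.2]
      norm_num
    rw [Finset.sum_congr rfl hcon, Finset.sum_const, nsmul_eq_mul, mul_one, Int.card_Icc]
    rw [show N + 1 - 1 = N from by ring]
    rw [show N.toNat = 2 * K from by omega]
    push_cast
    ring
  -- the residual
  set g : ℤ → ℂ := fun n =>
    if n = 0 ∨ n = 1 then -(Wc α θ 0 : ℂ)
    else if n = N ∨ n = N + 1 then -(Wc α θ N : ℂ) * uf N
    else 0 with hg
  have hr : ∀ n : ℤ, ((E • x - H x : ZSeq) : ∀ _ : ℤ, ℂ) n = g n := by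
    intro n
    have hco : ((E • x - H x : ZSeq) : ∀ _ : ℤ, ℂ) n
        = E * uf n - ((mosC α lam θ n : ℂ) * uf (n + 1)
          + (mosC α lam θ (n - 1) : ℂ) * uf (n - 1) + (mosV α lam θ n : ℂ) * uf n) := by
      rw [lp.coeFn_sub, Pi.sub_apply, lp.coeFn_smul, Pi.smul_apply, smul_eq_mul, hH x n]
    rw [hco]
    by_cases h0 : n = 0
    · subst h0
      rw [show (0:ℤ) + 1 = 1 from rfl, huf1, huf0 0 (by omega), huf0 (0 - 1) (by omega),
        mosC_even (n := 0) (by rw [Int.odd_iff]; omega)]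
      simp only [hg]
      rw [if_pos (by tauto)]
      ring
    by_cases h1 : n = 1
    · subst h1
      rw [hstep1 1 (by norm_num) (by norm_num) (by omega), huf1, huf0 (1 - 1) (by omega),
        mosC_odd (n := 1) (by rw [Int.odd_iff]; omega),
        mosV_odd (n := 1) (by rw [Int.odd_iff]; omega),
        show (1:ℤ) - 1 = 0 from rfl]
      simp only [hg]
      rw [if_pos (by tauto), hE]
      ring
    by_cases hNc : n = N
    · rw [hNc]
      have huN1 : uf (N + 1) = 0 := huf0 _ (by omega)
      have huNm : uf N = (σ:ℂ) * uf (N - 1) := by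
        have h := hstep1 (N - 1) (by omega) (by omega) (by omega)
        rw [show N - 1 + 1 = N from by ring] at h
        exact h
      have huNm' : uf (N - 1) = (σ:ℂ) * uf N := by
        rw [huNm, ← mul_assoc, hσ2, one_mul]
      rw [huN1, huNm', mosC_odd (n := N - 1) (by rw [Int.odd_iff]; omega),
        mosV_even (n := N) (by rw [Int.odd_iff]; omega),
        mosC_even (n := N) (by rw [Int.odd_iff]; omega)]
      simp only [hg]
      rw [if_neg (by omega), if_pos (by tauto), hE]
      ring
    by_cases hN1c : n = N + 1
    · rw [hN1c]
      have hu1 : uf (N + 1 + 1) = 0 := huf0 _ (by omega)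
      have hu2 : uf (N + 1) = 0 := huf0 _ (by omega)
      rw [hu1, hu2, show N + 1 - 1 = N from by ring,
        mosC_even (n := N) (by rw [Int.odd_iff]; omega)]
      simp only [hg]
      rw [if_neg (by omega), if_pos (by tauto)]
      ring
    by_cases hout : n < 0 ∨ N + 1 < n
    · have hu1 : uf (n + 1) = 0 := huf0 _ (by omega)
      have hu2 : uf n = 0 := huf0 _ (by omega)
      have hu3 : uf (n - 1) = 0 := huf0 _ (by omega)
      rw [hu1, hu2, hu3]
      simp only [hg]
      rw [if_neg (by omega), if_neg (by omega)]
      ring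
    -- interior rows
    have hint : 2 ≤ n ∧ n ≤ N - 1 := by omega
    have hgz : g n = 0 := by
      simp only [hg]
      rw [if_neg (by omega), if_neg (by omega)]
    rw [hgz]
    by_cases hodd : n % 2 = 1
    · have hu1 : uf (n + 1) = (σ:ℂ) * uf n := hstep1 n hodd (by omega) (by omega)
      have hu2 : uf n = -uf (n - 1) := by
        have h := hstep2 (n - 1) (by omega) (by omega) (by omega)
        rw [show n - 1 + 1 = n from by ring] at h
        exact h
      have hu3 : uf (n - 1) = -uf n := by rw [hu2]; ring
      rw [hu1, hu3, mosC_odd (n := n) (by rw [Int.odd_iff]; omega),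
        mosC_even (n := n - 1) (by rw [Int.odd_iff]; omega),
        mosV_odd (n := n) (by rw [Int.odd_iff]; omega), hE]
      ring
    · have hu1 : uf (n + 1) = -uf n := hstep2 n (by omega) (by omega) (by omega)
      have hu2 : uf n = (σ:ℂ) * uf (n - 1) := by
        have h := hstep1 (n - 1) (by omega) (by omega) (by omega)
        rw [show n - 1 + 1 = n from by ring] at h
        exact h
      have hu3 : uf (n - 1) = (σ:ℂ) * uf n := by rw [hu2, ← mul_assoc, hσ2, one_mul]
      rw [hu1, hu3, mosC_odd (n := n - 1) (by rw [Int.odd_iff]; omega),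
        mosC_even (n := n) (by rw [Int.odd_iff]; omega),
        mosV_even (n := n) (by rw [Int.odd_iff]; omega), hE]
      ring
  -- bound on the residual norm
  have hgb : ∀ n : ℤ, ‖g n‖ ≤ 1 := by
    intro n
    simp only [hg]
    split
    · rw [norm_neg, Complex.norm_real, Real.norm_eq_abs]
      exact Real.abs_cos_le_one _
    split
    · rw [norm_mul, norm_neg, Complex.norm_real, Real.norm_eq_abs]
      calc |Wc α θ N| * ‖uf N‖ ≤ 1 * 1 :=
        mul_le_mul (Real.abs_cos_le_one _) (hufabs N) (norm_nonneg _) zero_le_one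
      _ = 1 := by norm_num
    · simp
  set s4 : Finset ℤ := {0, 1, N, N + 1} with hs4
  have hrnorm : ‖E • x - H x‖ ^ 2 ≤ 4 := by
    rw [norm_sq_eq_sum (E • x - H x) s4 (fun n hn => by
      have hn' : ¬(n = 0 ∨ n = 1) ∧ ¬(n = N ∨ n = N + 1) := by
        simp only [hs4, Finset.mem_insert, Finset.mem_singleton] at hn
        push_neg at hn ⊢
        exact ⟨⟨hn.1, hn.2.1⟩, hn.2.2.1, hn.2.2.2⟩
      rw [hr n]
      simp only [hg]
      rw [if_neg hn'.1, if_neg hn'.2])]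
    have hcard : s4.card ≤ 4 := by
      have h1 := Finset.card_insert_le (0:ℤ) {1, N, N + 1}
      have h2 := Finset.card_insert_le (1:ℤ) {N, N + 1}
      have h3 := Finset.card_insert_le N {N + 1}
      simp only [Finset.card_singleton] at h1 h2 h3
      simp only [hs4]
      omega
    calc ∑ n ∈ s4, ‖((E • x - H x : ZSeq) : ∀ _ : ℤ, ℂ) n‖ ^ 2
        ≤ ∑ _n ∈ s4, 1 := by
          refine Finset.sum_le_sum (fun n _ => ?_)
          rw [hr n]
          have := hgb n
          nlinarith [norm_nonneg (g n)]
    _ = (s4.card : ℝ) := by rw [Finset.sum_const, nsmul_eq_mul, mul_one]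
    _ ≤ 4 := by exact_mod_cast hcard
  have hrn : ‖E • x - H x‖ ≤ 2 := by
    nlinarith [norm_nonneg (E • x - H x)]
  refine ⟨x, ?_⟩
  have hK2 : 2 * C ^ 2 < (K : ℝ) := by
    calc 2 * C ^ 2 ≤ (⌈2 * C ^ 2⌉₊ : ℝ) := Nat.le_ceil _
    _ < (K : ℝ) := by
      rw [hK]
      push_cast
      linarith
  have hxbig : 2 * C < ‖x‖ := by
    have h2 : (2 * C) ^ 2 < ‖x‖ ^ 2 := by rw [hxnorm]; nlinarith
    exact lt_of_pow_lt_pow_left₀ 2 (norm_nonneg x) h2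
  calc C * ‖E • x - H x‖ ≤ C * 2 := by nlinarith
  _ < ‖x‖ := by linarith

lemma gap_vector (α lam θ : ℝ) (hα : Irrational α) (hlam : 0 < lam) (H : ZSeq →L[ℂ] ZSeq)
    (hH : IsMosaicOp α lam θ H) : ∃ x : ZSeq, 0 < ‖x‖ ∧ ‖H x‖ < lam * ‖x‖ := by
  -- find an even site with nonvanishing cosine
  obtain ⟨j, hw⟩ : ∃ j : ℤ, Wc α θ (2 * j + 2) ≠ 0 := by
    by_contra hcon
    push_neg at hcon
    have h1 := hcon 0
    have h2 := hcon 1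
    rw [Wc, Real.cos_eq_zero_iff] at h1 h2
    obtain ⟨a, ha⟩ := h1
    obtain ⟨b, hb⟩ := h2
    push_cast at ha hb
    apply hα
    refine ⟨((b:ℚ) - (a:ℚ)) / 4, ?_⟩
    have hpi := Real.pi_ne_zero
    have key : π * (4 * α) = π * ((b:ℝ) - (a:ℝ)) := by ring_nf; ring_nf at ha hb; linarith
    have h4 : (4:ℝ) * α = (b:ℝ) - (a:ℝ) := mul_left_cancel₀ hpi key
    push_cast
    linarith
  set w : ℝ := Wc α θ (2 * j + 2) with hwdef
  set t : ℝ := lam / (2 * w) with ht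
  have htw : w * t = lam / 2 := by
    rw [ht]
    field_simp
  -- the test vector
  set uf : ℤ → ℂ := fun n =>
    if n = 2 * j then 1 else if n = 2 * j + 1 then -1 else if n = 2 * j + 2 then ((t:ℝ):ℂ)
    else 0 with huf
  have huz : ∀ m : ℤ, m ≠ 2 * j → m ≠ 2 * j + 1 → m ≠ 2 * j + 2 → uf m = 0 := by
    intro m h1 h2 h3
    simp only [huf]
    rw [if_neg h1, if_neg h2, if_neg h3]
  have huA : uf (2 * j) = 1 := by simp [huf]
  have huB : uf (2 * j + 1) = -1 := by
    simp only [huf]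
    rw [if_neg (by omega)]
    simp
  have huC : uf (2 * j + 2) = ((t:ℝ):ℂ) := by
    simp only [huf]
    rw [if_neg (by omega), if_neg (by omega)]
    simp
  set x : ZSeq := ⟨uf, memℓp_of_finite_support uf {2 * j, 2 * j + 1, 2 * j + 2}
    (fun n hn => by
      simp only [Finset.mem_insert, Finset.mem_singleton] at hn
      push_neg at hn
      exact huz n hn.1 hn.2.1 hn.2.2)⟩ with hx
  have hxapp : ∀ m : ℤ, (x : ∀ _ : ℤ, ℂ) m = uf m := fun m => rfl
  -- the image vector
  set g : ℤ → ℂ := fun n =>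
    if n = 2 * j - 1 then ((lam:ℝ):ℂ)
    else if n = 2 * j + 1 then ((lam * t : ℝ):ℂ)
    else if n = 2 * j + 2 then ((w * t - lam : ℝ):ℂ)
    else if n = 2 * j + 3 then ((w * t : ℝ):ℂ)
    else 0 with hg
  have hgA : g (2 * j - 1) = ((lam:ℝ):ℂ) := by simp [hg]
  have hgZ : g (2 * j) = 0 := by
    simp only [hg]
    rw [if_neg (by omega), if_neg (by omega), if_neg (by omega), if_neg (by omega)]
  have hgB : g (2 * j + 1) = ((lam * t : ℝ):ℂ) := by
    simp only [hg]
    rw [if_neg (by omega)]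
    simp
  have hgC : g (2 * j + 2) = ((w * t - lam : ℝ):ℂ) := by
    simp only [hg]
    rw [if_neg (by omega), if_neg (by omega)]
    simp
  have hgD : g (2 * j + 3) = ((w * t : ℝ):ℂ) := by
    simp only [hg]
    rw [if_neg (by omega), if_neg (by omega), if_neg (by omega)]
    simp
  have hHx : ∀ n : ℤ, ((H x : ZSeq) : ∀ _ : ℤ, ℂ) n = g n := by
    intro n
    have hco : ((H x : ZSeq) : ∀ _ : ℤ, ℂ) n
        = (mosC α lam θ n : ℂ) * uf (n + 1)
          + (mosC α lam θ (n - 1) : ℂ) * uf (n - 1) + (mosV α lam θ n : ℂ) * uf n :=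
      hH x n
    rw [hco]
    by_cases h1 : n = 2 * j - 1
    · rw [h1, show 2 * j - 1 + 1 = 2 * j from by ring, huA,
        huz (2 * j - 1 - 1) (by omega) (by omega) (by omega),
        huz (2 * j - 1) (by omega) (by omega) (by omega),
        mosC_odd (n := 2 * j - 1) (by rw [Int.odd_iff]; omega), hgA]
      ring
    by_cases h2 : n = 2 * j
    · rw [h2, huA, huB,
        huz (2 * j - 1) (by omega) (by omega) (by omega),
        mosC_even (n := 2 * j) (by rw [Int.odd_iff]; omega),
        mosV_even (n := 2 * j) (by rw [Int.odd_iff]; omega), hgZ]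
      ring
    by_cases h3 : n = 2 * j + 1
    · rw [h3, show 2 * j + 1 + 1 = 2 * j + 2 from by ring,
        show 2 * j + 1 - 1 = 2 * j from by ring, huA, huB, huC,
        mosC_odd (n := 2 * j + 1) (by rw [Int.odd_iff]; omega),
        mosC_even (n := 2 * j) (by rw [Int.odd_iff]; omega),
        mosV_odd (n := 2 * j + 1) (by rw [Int.odd_iff]; omega),
        show 2 * j + 1 - 1 = 2 * j from by ring, hgB]
      push_cast
      ring
    by_cases h4 : n = 2 * j + 2
    · rw [h4, show 2 * j + 2 + 1 = 2 * j + 3 from by ring,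
        show 2 * j + 2 - 1 = 2 * j + 1 from by ring, huB, huC,
        huz (2 * j + 3) (by omega) (by omega) (by omega),
        mosC_odd (n := 2 * j + 1) (by rw [Int.odd_iff]; omega),
        mosV_even (n := 2 * j + 2) (by rw [Int.odd_iff]; omega), hgC]
      push_cast
      ring
    by_cases h5 : n = 2 * j + 3
    · rw [h5, show 2 * j + 3 + 1 = 2 * j + 4 from by ring,
        show 2 * j + 3 - 1 = 2 * j + 2 from by ring, huC,
        huz (2 * j + 4) (by omega) (by omega) (by omega),
        huz (2 * j + 3) (by omega) (by omega) (by omega),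
        mosC_even (n := 2 * j + 2) (by rw [Int.odd_iff]; omega), hgD]
      push_cast
      ring
    · rw [huz (n + 1) (by omega) (by omega) (by omega),
        huz (n - 1) (by omega) (by omega) (by omega),
        huz n (by omega) (by omega) (by omega)]
      simp only [hg]
      rw [if_neg (by omega), if_neg (by omega), if_neg (by omega), if_neg (by omega)]
      ring
  -- norms
  have hsq : ∀ r : ℝ, ‖((r:ℝ):ℂ)‖ ^ 2 = r ^ 2 := fun r => by
    rw [Complex.norm_real, Real.norm_eq_abs, sq_abs]
  have hxnorm : ‖x‖ ^ 2 = 2 + t ^ 2 := by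
    rw [norm_sq_eq_sum x {2 * j, 2 * j + 1, 2 * j + 2}
      (fun n hn => by
        simp only [Finset.mem_insert, Finset.mem_singleton] at hn
        push_neg at hn
        exact huz n hn.1 hn.2.1 hn.2.2)]
    rw [Finset.sum_insert (by simp only [Finset.mem_insert, Finset.mem_singleton]; omega),
      Finset.sum_insert (by simp only [Finset.mem_singleton]; omega),
      Finset.sum_singleton]
    rw [hxapp, hxapp, hxapp, huA, huB, huC, hsq]
    simp
    ring
  have hHnorm : ‖H x‖ ^ 2 = lam ^ 2 + (lam * t) ^ 2 + (w * t - lam) ^ 2 + (w * t) ^ 2 := by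
    rw [norm_sq_eq_sum (H x) {2 * j - 1, 2 * j + 1, 2 * j + 2, 2 * j + 3}
      (fun n hn => by
        simp only [Finset.mem_insert, Finset.mem_singleton] at hn
        push_neg at hn
        rw [hHx n]
        simp only [hg]
        rw [if_neg hn.1, if_neg hn.2.1, if_neg hn.2.2.1, if_neg hn.2.2.2])]
    rw [Finset.sum_insert (by simp only [Finset.mem_insert, Finset.mem_singleton]; omega),
      Finset.sum_insert (by simp only [Finset.mem_insert, Finset.mem_singleton]; omega),
      Finset.sum_insert (by simp only [Finset.mem_singleton]; omega),
      Finset.sum_singleton]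
    rw [hHx, hHx, hHx, hHx, hgA, hgB, hgC, hgD, hsq, hsq, hsq, hsq]
    ring
  have hxpos : 0 < ‖x‖ := by
    rcases (norm_nonneg x).lt_or_eq with h | h
    · exact h
    · exfalso
      have : ‖x‖ ^ 2 = 0 := by rw [← h]; ring
      rw [hxnorm] at this
      nlinarith [sq_nonneg t]
  refine ⟨x, hxpos, ?_⟩
  have hlt : ‖H x‖ ^ 2 < (lam * ‖x‖) ^ 2 := by
    have h1 : (lam * ‖x‖) ^ 2 = lam ^ 2 * ‖x‖ ^ 2 := by ring
    rw [hHnorm, h1, hxnorm, htw]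
    nlinarith [sq_nonneg t, sq_nonneg lam, mul_pos hlam hlam]
  exact lt_of_pow_lt_pow_left₀ 2 (by positivity) hlt

lemma gap_nonempty (lam : ℝ) (hlam : 0 < lam) (H : ZSeq →L[ℂ] ZSeq) (hsa : IsSelfAdjoint H)
    (x : ZSeq) (hx0 : 0 < ‖x‖) (hx : ‖H x‖ < lam * ‖x‖) :
    ∃ E : ℝ, (E:ℂ) ∈ spectrum ℂ H ∧ E ∈ Set.Ioo (-lam) lam := by
  by_contra hcon
  push_neg at hcon
  have hge : ∀ z : ℂ, z ∈ spectrum ℂ H → lam ≤ ‖z‖ := by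
    intro z hz
    have hzre := hsa.mem_spectrum_eq_re hz
    have hz' : ((z.re : ℝ) : ℂ) ∈ spectrum ℂ H := by rw [← hzre]; exact hz
    have h2 := hcon z.re hz'
    rw [Set.mem_Ioo] at h2
    push_neg at h2
    have h5 : lam ≤ |z.re| := by
      by_contra h3
      push_neg at h3
      rw [abs_lt] at h3
      exact absurd (h2 h3.1) (not_le.mpr h3.2)
    calc lam ≤ |z.re| := h5
    _ = ‖((z.re:ℝ):ℂ)‖ := by rw [Complex.norm_real, Real.norm_eq_abs]
    _ = ‖z‖ := by rw [← hzre]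
  have h0 : (0:ℂ) ∉ spectrum ℂ H := by
    intro h
    have := hge 0 h
    simp at this
    linarith
  have hunit : IsUnit H := (spectrum.zero_notMem_iff ℂ).mp h0
  obtain ⟨U, hU⟩ := hunit
  set B : ZSeq →L[ℂ] ZSeq := (↑U⁻¹ : ZSeq →L[ℂ] ZSeq) with hBdef
  have hBH : B * H = 1 := by rw [← hU]; exact U.inv_mul
  have hHB : H * B = 1 := by rw [← hU]; exact U.mul_inv
  have hBsa : IsSelfAdjoint B := by
    have h1 : star B * H = 1 := by
      have h2 : star (H * B) = 1 := by rw [hHB, star_one]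
      rwa [star_mul, hsa.star_eq] at h2
    show star B = B
    calc star B = star B * (H * B) := by rw [hHB, mul_one]
    _ = (star B * H) * B := by rw [mul_assoc]
    _ = B := by rw [h1, one_mul]
  have hBspec : ∀ μ : ℂ, μ ∈ spectrum ℂ B → ‖μ‖ ≤ lam⁻¹ := by
    intro μ hμ
    have hμ0 : μ ≠ 0 := by
      intro h
      rw [h] at hμ
      exact (spectrum.zero_notMem_iff ℂ).mpr (U⁻¹).isUnit hμ
    have h2 : μ⁻¹ ∈ spectrum ℂ H := by
      have h3 := (spectrum.inv_mem_iff (r := Units.mk0 μ hμ0) (a := U⁻¹)).mp (by simpa using hμ)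
      simpa [hU] using h3
    have h4 := hge μ⁻¹ h2
    rw [norm_inv] at h4
    have hμn : 0 < ‖μ‖ := norm_pos_iff.mpr hμ0
    have h6 : lam ≤ 1 / ‖μ‖ := by rw [one_div]; exact h4
    rw [le_div_iff₀ hμn] at h6
    nlinarith [mul_inv_cancel₀ (ne_of_gt hlam)]
  have hrad : spectralRadius ℂ B ≤ ENNReal.ofReal (lam⁻¹) := by
    rw [spectralRadius]
    refine iSup₂_le fun μ hμ => ?_
    rw [← ENNReal.ofReal_coe_nnreal, coe_nnnorm]
    exact ENNReal.ofReal_le_ofReal (hBspec μ hμ)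
  have hBnorm : ‖B‖ ≤ lam⁻¹ := by
    have h6 := hBsa.toReal_spectralRadius_complex_eq_norm
    rw [← h6]
    exact ENNReal.toReal_le_of_le_ofReal (by positivity) hrad
  have h7 : ‖x‖ ≤ ‖B‖ * ‖H x‖ := by
    have h8 : B (H x) = x := by
      calc B (H x) = (B * H) x := rfl
      _ = x := by rw [hBH]; rfl
    calc ‖x‖ = ‖B (H x)‖ := by rw [h8]
    _ ≤ ‖B‖ * ‖H x‖ := B.le_opNorm _
  have h9 : ‖B‖ * ‖H x‖ ≤ lam⁻¹ * ‖H x‖ := mul_le_mul_of_nonneg_right hBnorm (norm_nonneg _)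
  have h10 : lam⁻¹ * ‖H x‖ < lam⁻¹ * (lam * ‖x‖) := by
    apply mul_lt_mul_of_pos_left hx (by positivity)
  have h11 : lam⁻¹ * (lam * ‖x‖) = ‖x‖ := by field_simp
  linarith

/-- For every `λ > 0` and every irrational `α`, both `λ` and `−λ` belong
to `σ^H(c,v)`; moreover, the set `σ^H(c,v) ∩ (−λ, λ)` is nonempty. -/
theorem mosaic_pm_lambda_in_spectrum (α lam θ : ℝ) (hα : Irrational α) (hlam : 0 < lam)
    (H : ZSeq →L[ℂ] ZSeq) (hH : IsMosaicOp α lam θ H) :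
    lam ∈ realSpectrum H ∧ -lam ∈ realSpectrum H ∧
      (realSpectrum H ∩ Set.Ioo (-lam) lam).Nonempty := by
  have hsa : IsSelfAdjoint H := mosaic_selfAdjoint α lam θ H hH
  refine ⟨?_, ?_, ?_⟩
  · have h := pm_lam_mem α lam θ H hH 1 (Or.inl rfl)
    have he : ((1 * lam : ℝ) : ℂ) = ((lam : ℝ) : ℂ) := by norm_num
    rw [he] at h
    exact h
  · have h := pm_lam_mem α lam θ H hH (-1) (Or.inr rfl)
    have he : ((-1 * lam : ℝ) : ℂ) = ((-lam : ℝ) : ℂ) := by norm_num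
    rw [he] at h
    exact h
  · obtain ⟨x, hx0, hxlt⟩ := gap_vector α lam θ hα hlam H hH
    obtain ⟨E, hE1, hE2⟩ := gap_nonempty lam hlam H hsa x hx0 hxlt
    exact ⟨E, hE1, hE2⟩
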